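/- Let K ∈ ℝ, D > 0 and λ ∈ ℝ. Suppose f : ℝ → ℝ is twice continuously differentiable on [−D, D], satisfies f(−D) = f(D) = 0, satisfies f(x) > 0 for all x ∈ (−D, D), and satisfies the Dirichlet eigenvalue equation f''(x) − K·x·f'(x) = −(λ − K)·f(x) for all x ∈ [−D, D]. Then with d = 2D, for every s ∈ (0, 1) one has λ ≥ 4s(1−s)·π²/d² + K·s. -/

import Mathlib

open Real Set Filter Topology

lemma secondDerivTest {w w' : ℝ → ℝ} {x₀ a : ℝ} {U : Set ℝ} (hU : U ∈ 𝓝 x₀)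
    (hd : ∀ x ∈ U, HasDerivAt w (w' x) x) (hd2 : HasDerivAt w' a x₀)
    (hmax : IsLocalMax w x₀) : a ≤ 0 := by
  by_contra h
  push_neg at h
  have hw'0 : w' x₀ = 0 := hmax.hasDerivAt_eq_zero (hd x₀ (mem_of_mem_nhds hU))
  have hslope : Tendsto (slope w' x₀) (𝓝[≠] x₀) (𝓝 a) :=
    hasDerivAt_iff_tendsto_slope.1 hd2
  have hpos : ∀ᶠ x in 𝓝[>] x₀, 0 < w' x := by
    have : ∀ᶠ x in 𝓝[>] x₀, 0 < slope w' x₀ x :=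
      (hslope.mono_left (nhdsWithin_mono _ fun x hx => ne_of_gt hx)).eventually_const_lt h
    filter_upwards [this, self_mem_nhdsWithin] with x hx hx'
    rw [slope_def_field, hw'0, sub_zero] at hx
    have h0 : 0 < x - x₀ := sub_pos.2 hx'
    have := mul_pos hx h0
    rwa [div_mul_cancel₀] at this
    exact ne_of_gt h0
  have hE : ∀ᶠ x in 𝓝[>] x₀, w x ≤ w x₀ ∧ x ∈ U ∧ 0 < w' x := by
    filter_upwards [hpos, (hmax.filter_mono (nhdsWithin_le_nhds)), nhdsWithin_le_nhds hU]
      with x h1 h2 h3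
    exact ⟨h2, h3, h1⟩
  obtain ⟨c, hc, hsub⟩ := (mem_nhdsGT_iff_exists_Ioc_subset).1 hE
  have hIccU : Icc x₀ c ⊆ U := by
    intro x hx
    rcases eq_or_lt_of_le hx.1 with rfl | hlt
    · exact mem_of_mem_nhds hU
    · exact (hsub ⟨hlt, hx.2⟩).2.1
  have hmono : StrictMonoOn w (Icc x₀ c) := by
    apply strictMonoOn_of_deriv_pos (convex_Icc _ _)
    · exact fun x hx => ((hd x (hIccU hx)).continuousAt).continuousWithinAt
    · intro x hx
      rw [interior_Icc] at hx
      rw [(hd x (hIccU ⟨hx.1.le, hx.2.le⟩)).deriv]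
      exact (hsub ⟨hx.1, hx.2.le⟩).2.2
  have h1 : w x₀ < w c := hmono (left_mem_Icc.2 hc.le) (right_mem_Icc.2 hc.le) hc
  have h2 : w c ≤ w x₀ := (hsub ⟨hc, le_refl c⟩).1
  linarith

lemma phi_hasDeriv (p γ b x : ℝ) (hc : 0 < Real.cos (b*x)) :
    HasDerivAt (fun y => Real.cos (b*y) ^ p * Real.exp (γ/2 * y^2))
      ((Real.cos (b*x) ^ p * Real.exp (γ/2 * x^2)) * (γ*x - p*b*Real.tan (b*x))) x := by
  have hbx : HasDerivAt (fun y : ℝ => b*y) b x := by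
    simpa using (hasDerivAt_id x).const_mul b
  have hcos : HasDerivAt (fun y => Real.cos (b*y)) (-Real.sin (b*x) * b) x := hbx.cos
  have hrpow : HasDerivAt (fun y => Real.cos (b*y) ^ p)
      ((-Real.sin (b*x) * b) * p * Real.cos (b*x) ^ (p-1)) x :=
    hcos.rpow_const (Or.inl hc.ne')
  have hsq : HasDerivAt (fun y : ℝ => γ/2 * y^2) (γ/2 * (2*x)) x := by
    simpa using (hasDerivAt_pow 2 x).const_mul (γ/2)
  have h := hrpow.mul hsq.exp
  convert h using 1
  iterate 3 rfl
  rw [Real.tan_eq_sin_div_cos, Real.rpow_sub_one hc.ne']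
  field_simp
  ring

lemma phi1_hasDeriv (p γ b x : ℝ) (hc : 0 < Real.cos (b*x)) :
    HasDerivAt (fun y => (Real.cos (b*y) ^ p * Real.exp (γ/2 * y^2)) * (γ*y - p*b*Real.tan (b*y)))
      ((Real.cos (b*x) ^ p * Real.exp (γ/2 * x^2)) *
        ((γ*x - p*b*Real.tan (b*x))^2 + γ - p*b^2*(1 + Real.tan (b*x)^2))) x := by
  have hbx : HasDerivAt (fun y : ℝ => b*y) b x := by
    simpa using (hasDerivAt_id x).const_mul b
  have htan : HasDerivAt (fun y => Real.tan (b*y)) (1/Real.cos (b*x)^2 * b) x :=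
    (Real.hasDerivAt_tan hc.ne').comp x hbx
  have hL : HasDerivAt (fun y => γ*y - p*b*Real.tan (b*y))
      (γ - p*b*(1/Real.cos (b*x)^2 * b)) x := by
    have h1 : HasDerivAt (fun y : ℝ => γ*y) γ x := by simpa using (hasDerivAt_id x).const_mul γ
    exact h1.sub (htan.const_mul (p*b))
  have h := (phi_hasDeriv p γ b x hc).mul hL
  convert h using 1
  iterate 3 rfl
  have ht : Real.tan (b*x)^2 + 1 = 1/Real.cos (b*x)^2 := by
    rw [Real.tan_eq_sin_div_cos]
    field_simp
    exact Real.sin_sq_add_cos_sq _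
  rw [show (1 + Real.tan (b*x)^2) = 1/Real.cos (b*x)^2 by linarith]
  ring

lemma key_estimate (K D lam : ℝ) (hD : 0 < D) (f : ℝ → ℝ)
    (hf : ContDiffOn ℝ 2 f (Icc (-D) D))
    (hbl : f (-D) = 0) (hbr : f D = 0)
    (hpos : ∀ x ∈ Ioo (-D) D, 0 < f x)
    (heig : ∀ x ∈ Icc (-D) D,
      deriv (deriv f) x - K * x * deriv f x = -(lam - K) * f x)
    (s b : ℝ) (hs0 : 0 < s) (hs1 : s < 1) (hb : 0 < b) (hbD : b * D < π/2) :
    4*s*(1-s)*b^2 + K*s ≤ lam := by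
  set p : ℝ := 4*s*(1-s) with hp
  set γ : ℝ := K*(1-s) with hγ
  set φ : ℝ → ℝ := fun x => Real.cos (b*x) ^ p * Real.exp (γ/2 * x^2) with hφ
  set φ₁ : ℝ → ℝ := fun x => φ x * (γ*x - p*b*Real.tan (b*x)) with hφ₁
  set φ₂ : ℝ → ℝ := fun x => φ x *
      ((γ*x - p*b*Real.tan (b*x))^2 + γ - p*b^2*(1 + Real.tan (b*x)^2)) with hφ₂
  have hcos : ∀ x ∈ Icc (-D) D, 0 < Real.cos (b*x) := by
    intro x hx
    apply Real.cos_pos_of_mem_Ioo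
    constructor
    · nlinarith [hx.1]
    · nlinarith [hx.2]
  have hφpos : ∀ x ∈ Icc (-D) D, 0 < φ x := fun x hx =>
    mul_pos (Real.rpow_pos_of_pos (hcos x hx) p) (Real.exp_pos _)
  -- maximize f/φ
  have hφcont : ContinuousOn φ (Icc (-D) D) := by
    apply ContinuousOn.mul
    · exact ContinuousOn.rpow_const
        ((Real.continuous_cos.comp (continuous_const.mul continuous_id)).continuousOn)
        (fun x hx => Or.inl (hcos x hx).ne')
    · exact (Real.continuous_exp.comp (by continuity)).continuousOn
  have hgcont : ContinuousOn (fun x => f x / φ x) (Icc (-D) D) :=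
    hf.continuousOn.div hφcont (fun x hx => (hφpos x hx).ne')
  obtain ⟨x₀, hx₀mem, hx₀max⟩ := isCompact_Icc.exists_isMaxOn
    (nonempty_Icc.2 (by linarith)) hgcont
  set M : ℝ := f x₀ / φ x₀ with hM
  have h0mem : (0:ℝ) ∈ Icc (-D) D := ⟨by linarith, by linarith⟩
  have hMpos : 0 < M := by
    have h1 : f 0 / φ 0 ≤ M := hx₀max h0mem
    have h2 : 0 < f 0 / φ 0 := div_pos (hpos 0 ⟨by linarith, hD⟩) (hφpos 0 h0mem)
    linarith
  have hx₀Ioo : x₀ ∈ Ioo (-D) D := by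
    rcases eq_or_lt_of_le hx₀mem.1 with h | h
    · exfalso; rw [hM, ← h, hbl] at hMpos; simp at hMpos
    rcases eq_or_lt_of_le hx₀mem.2 with h' | h'
    · exfalso; rw [hM, h', hbr] at hMpos; simp at hMpos
    exact ⟨h, h'⟩
  have hfM : ∀ x ∈ Icc (-D) D, f x ≤ M * φ x := by
    intro x hx
    have h2 : f x / φ x ≤ f x₀ / φ x₀ := hx₀max hx
    rwa [div_le_iff₀ (hφpos x hx)] at h2
  have hfx₀ : f x₀ = M * φ x₀ := by
    rw [hM, div_mul_cancel₀]
    exact (hφpos x₀ hx₀mem).ne'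
  -- local max of w = f - M φ at x₀
  set w : ℝ → ℝ := fun x => f x - M * φ x with hw
  have hIccnhds : Icc (-D) D ∈ 𝓝 x₀ := Icc_mem_nhds hx₀Ioo.1 hx₀Ioo.2
  have hlocmax : IsLocalMax w x₀ := by
    filter_upwards [hIccnhds] with x hx
    have := hfM x hx
    simp only [hw]
    rw [hfx₀]
    linarith
  -- derivatives
  have hfU : ∀ x ∈ Ioo (-D) D, HasDerivAt f (deriv f x) x := by
    intro x hx
    exact (((hf.mono Ioo_subset_Icc_self).contDiffAt
      (isOpen_Ioo.mem_nhds hx)).differentiableAt (by norm_num)).hasDerivAt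
  have hfd2 : HasDerivAt (deriv f) (deriv (deriv f) x₀) x₀ := by
    have h1 : ContDiffOn ℝ 1 (deriv f) (Ioo (-D) D) :=
      (hf.mono Ioo_subset_Icc_self).deriv_of_isOpen isOpen_Ioo (by norm_num)
    exact (((h1.contDiffAt (isOpen_Ioo.mem_nhds hx₀Ioo)).differentiableAt
      (by norm_num)).hasDerivAt)
  set w' : ℝ → ℝ := fun x => deriv f x - M * φ₁ x with hw'
  have hwd : ∀ x ∈ Ioo (-D) D, HasDerivAt w (w' x) x := by
    intro x hx
    exact (hfU x hx).sub
      ((phi_hasDeriv p γ b x (hcos x (Ioo_subset_Icc_self hx))).const_mul M)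
  have hwd2 : HasDerivAt w' (deriv (deriv f) x₀ - M * φ₂ x₀) x₀ :=
    hfd2.sub ((phi1_hasDeriv p γ b x₀ (hcos x₀ hx₀mem)).const_mul M)
  have hsecond : deriv (deriv f) x₀ - M * φ₂ x₀ ≤ 0 :=
    secondDerivTest (isOpen_Ioo.mem_nhds hx₀Ioo) hwd hwd2 hlocmax
  have hfirst : deriv f x₀ = M * φ₁ x₀ := by
    have := hlocmax.hasDerivAt_eq_zero (hwd x₀ hx₀Ioo)
    simp only [hw'] at this
    linarith
  -- barrier inequality at x₀
  have hbarrier : φ₂ x₀ - K*x₀*φ₁ x₀ ≤ -(p*b^2 + K*(s-1)) * φ x₀ := by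
    have hP : 0 < φ x₀ := hφpos x₀ hx₀mem
    have hnn : 0 ≤ φ x₀ * (s*(1-s) * (2*(2*s-1)*b*Real.tan (b*x₀) - K*x₀)^2) :=
      mul_nonneg hP.le (mul_nonneg (mul_nonneg hs0.le (by linarith)) (sq_nonneg _))
    have hkey2 : φ₂ x₀ - K*x₀*φ₁ x₀ + (p*b^2 + K*(s-1)) * φ x₀
        = -(φ x₀ * (s*(1-s) * (2*(2*s-1)*b*Real.tan (b*x₀) - K*x₀)^2)) := by
      simp only [hφ₂, hφ₁, hp, hγ]
      ring
    linarith
  -- combine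
  have heq := heig x₀ hx₀mem
  rw [hfirst, hfx₀] at heq
  have hMφ : 0 < M * φ x₀ := mul_pos hMpos (hφpos x₀ hx₀mem)
  have h4 := mul_le_mul_of_nonneg_left hbarrier hMpos.le
  show p*b^2 + K*s ≤ lam
  nlinarith [h4, hsecond, heq, hMφ]


/-- Futaki–Li–Li: Dirichlet estimate for `L = d²/dx² - Kx d/dx` on `[-D, D]`:
if `f` is a positive Dirichlet eigenfunction with eigenvalue `λ - K`, then
`λ ≥ 4s(1-s)π²/d² + Ks` for all `s ∈ (0,1)`, where `d = 2D`. -/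
theorem stmt_1 (K D lam : ℝ) (hD : 0 < D) (f : ℝ → ℝ)
    (hf : ContDiffOn ℝ 2 f (Icc (-D) D))
    (hbl : f (-D) = 0) (hbr : f D = 0)
    (hpos : ∀ x ∈ Ioo (-D) D, 0 < f x)
    (heig : ∀ x ∈ Icc (-D) D,
      deriv (deriv f) x - K * x * deriv f x = -(lam - K) * f x) :
    ∀ s ∈ Ioo (0:ℝ) 1, lam ≥ 4 * s * (1 - s) * π ^ 2 / (2 * D) ^ 2 + K * s := by
  intro s hs
  have hα : 0 < π / (2*D) := div_pos Real.pi_pos (by linarith)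
  have hkey : ∀ b ∈ Ioo (0:ℝ) (π/(2*D)), 4*s*(1-s)*b^2 + K*s ≤ lam := by
    intro b hb
    apply key_estimate K D lam hD f hf hbl hbr hpos heig s b hs.1 hs.2 hb.1
    have := mul_lt_mul_of_pos_right hb.2 hD
    rw [div_mul_eq_mul_div] at this
    calc b * D < π * D / (2*D) := this
    _ = π / 2 := by field_simp
  have hten : Tendsto (fun b : ℝ => 4*s*(1-s)*b^2 + K*s) (𝓝[<] (π/(2*D)))
      (𝓝 (4*s*(1-s)*(π/(2*D))^2 + K*s)) :=
    tendsto_nhdsWithin_of_tendsto_nhds ((Continuous.tendsto (by continuity) _))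
  have hev : ∀ᶠ b in 𝓝[<] (π/(2*D)), 4*s*(1-s)*b^2 + K*s ≤ lam := by
    filter_upwards [Ioo_mem_nhdsLT_of_mem (⟨hα, le_refl _⟩ :
      π/(2*D) ∈ Ioc (0:ℝ) (π/(2*D)))] with b hb
    exact hkey b hb
  have hfin := le_of_tendsto hten hev
  have heq2 : 4*s*(1-s)*(π/(2*D))^2 + K*s = 4*s*(1-s)*π^2/(2*D)^2 + K*s := by
    rw [div_pow]
    ring
  rw [heq2] at hfin
  linarith
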